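/- If t is a positive integer not divisible by 3, then a₃(t) = 0; that is, there is no 3×3 magic square with magic sum t. -/
import Mathlib


/-- A 3×3 magic square with magic sum `t`: pairwise distinct positive integer entries,
all row sums, column sums, and both main diagonal sums equal to `t`. -/
def IsMagicSquare3 (t : ℕ) (M : Matrix (Fin 3) (Fin 3) ℕ) : Prop :=
  (∀ i j, 0 < M i j) ∧
  (Function.Injective fun p : Fin 3 × Fin 3 => M p.1 p.2) ∧
  (∀ i, ∑ j, M i j = t) ∧
  (∀ j, ∑ i, M i j = t) ∧
  M 0 0 + M 1 1 + M 2 2 = t ∧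
  M 0 2 + M 1 1 + M 2 0 = t

/-- The number of 3×3 magic squares with magic sum `t`. -/
noncomputable def a3 (t : ℕ) : ℕ := Set.ncard {M : Matrix (Fin 3) (Fin 3) ℕ | IsMagicSquare3 t M}

theorem a3_eq_zero_of_not_three_dvd (t : ℕ) (ht : 0 < t) (h : ¬ (3 ∣ t)) :
    a3 t = 0 := by
  have hempty : {M : Matrix (Fin 3) (Fin 3) ℕ | IsMagicSquare3 t M} = ∅ := by
    rw [Set.eq_empty_iff_forall_notMem]
    intro M hM
    obtain ⟨-, -, hrow, hcol, hd1, hd2⟩ := hM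
    have h0 := hrow 0
    have h1 := hrow 1
    have h3 := hrow 2
    have h2 := hcol 1
    simp [Fin.sum_univ_three] at h0 h1 h3 h2 hd1 hd2
    exact h ⟨M 1 1, by omega⟩
  rw [a3, hempty, Set.ncard_empty]
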